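/- arXiv:1704.05109 — 2 statements merged into one kernel-verified Lean document; each statement's English description precedes it below -/
import Mathlib

section
/- Let X be a smooth cubic surface over a field k with a k-line L, and f : X → P¹ the conic bundle given by planes through L. Then f admits a section if and only if there exists a k-line L' ⊂ X disjoint from L; moreover every such line L' is a section of f. -/
/-!
Model: the Picard group of a smooth cubic surface over a separably closed
field is identified with `ℤ⁷ = Fin 7 → ℤ` with its standard basis
`λ₀, L₁, …, L₆` (pullback of a line and the six exceptional classes),
intersection form `picInter`, canonical class `KX = -3λ₀ + L₁ + ⋯ + L₆`.
The classes of the 27 lines are exactly the classes `l` with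
`l·l = -1` and `KX·l = -1`.
-/

def picInter (a b : Fin 7 → ℤ) : ℤ := a 0 * b 0 - ∑ i : Fin 6, a i.succ * b i.succ

def KX : Fin 7 → ℤ := ![-3, 1, 1, 1, 1, 1, 1]

def IsLineClass (l : Fin 7 → ℤ) : Prop := picInter l l = -1 ∧ picInter KX l = -1

/-!
Galois model: for a smooth cubic surface `X` over a field `k`, split by a
finite Galois extension with group `G`, the Galois action on the geometric
Picard group is a homomorphism `ρ : G →* AddAut (Fin 7 → ℤ)` preserving the
intersection form, the canonical class and the set of line classes.
`Pic(X)` is identified with the fixed subgroup `fixedSubgroup ρ`, and the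
subgroup `Δ ⊆ Pic(X)` generated by norms (from finite separable extensions)
of lines is `Delta ρ`: the subgroup generated by the Galois-orbit sums
(= norms from the field of definition) of the 27 line classes.
-/

variable {G : Type*} [Group G] [Fintype G]

noncomputable def normOrbit (ρ : G →* Multiplicative (AddAut (Fin 7 → ℤ))) (l : Fin 7 → ℤ) : Fin 7 → ℤ :=
  ∑ m ∈ Finset.image (fun g => (ρ g).toAdd l) Finset.univ, m

noncomputable def Delta (ρ : G →* Multiplicative (AddAut (Fin 7 → ℤ))) : AddSubgroup (Fin 7 → ℤ) :=
  AddSubgroup.closure { x | ∃ l, IsLineClass l ∧ x = normOrbit ρ l }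

def fixedSubgroup (ρ : G →* Multiplicative (AddAut (Fin 7 → ℤ))) : AddSubgroup (Fin 7 → ℤ) where
  carrier := {x | ∀ g, (ρ g).toAdd x = x}
  zero_mem' := fun g => map_zero (ρ g).toAdd
  add_mem' := fun {a b} ha hb g => by rw [map_add, ha g, hb g]
  neg_mem' := fun {a} ha g => by rw [map_neg, ha g]



lemma picInter_expand (a b : Fin 7 → ℤ) :
    picInter a b = a 0 * b 0 - (a 1 * b 1 + a 2 * b 2 + a 3 * b 3 + a 4 * b 4 + a 5 * b 5 + a 6 * b 6) := by
  simp [picInter, Fin.sum_univ_six]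

def lines27 : List (Fin 7 → ℤ) := [
  ![0, 1, 0, 0, 0, 0, 0],
  ![0, 0, 1, 0, 0, 0, 0],
  ![0, 0, 0, 1, 0, 0, 0],
  ![0, 0, 0, 0, 1, 0, 0],
  ![0, 0, 0, 0, 0, 1, 0],
  ![0, 0, 0, 0, 0, 0, 1],
  ![1, -1, -1, 0, 0, 0, 0],
  ![1, -1, 0, -1, 0, 0, 0],
  ![1, -1, 0, 0, -1, 0, 0],
  ![1, -1, 0, 0, 0, -1, 0],
  ![1, -1, 0, 0, 0, 0, -1],
  ![1, 0, -1, -1, 0, 0, 0],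
  ![1, 0, -1, 0, -1, 0, 0],
  ![1, 0, -1, 0, 0, -1, 0],
  ![1, 0, -1, 0, 0, 0, -1],
  ![1, 0, 0, -1, -1, 0, 0],
  ![1, 0, 0, -1, 0, -1, 0],
  ![1, 0, 0, -1, 0, 0, -1],
  ![1, 0, 0, 0, -1, -1, 0],
  ![1, 0, 0, 0, -1, 0, -1],
  ![1, 0, 0, 0, 0, -1, -1],
  ![2, 0, -1, -1, -1, -1, -1],
  ![2, -1, 0, -1, -1, -1, -1],
  ![2, -1, -1, 0, -1, -1, -1],
  ![2, -1, -1, -1, 0, -1, -1],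
  ![2, -1, -1, -1, -1, 0, -1],
  ![2, -1, -1, -1, -1, -1, 0]
]

lemma KX_expand (x : Fin 7 → ℤ) :
    picInter KX x = -3 * x 0 - (x 1 + x 2 + x 3 + x 4 + x 5 + x 6) := by
  rw [picInter_expand]
  simp only [show KX 0 = -3 from rfl, show KX 1 = 1 from rfl, show KX 2 = 1 from rfl,
    show KX 3 = 1 from rfl, show KX 4 = 1 from rfl, show KX 5 = 1 from rfl,
    show KX 6 = 1 from rfl]
  ring

lemma int_sq_sub (n : ℤ) : 0 ≤ n * n - n := by
  rcases le_or_gt 1 n with h | h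
  · nlinarith
  · nlinarith

lemma int_sq_add (n : ℤ) : 0 ≤ n * n + n := by
  rcases le_or_gt 0 n with h | h
  · nlinarith
  · nlinarith

lemma zero_or_one (n : ℤ) (h : n * n = n) : n = 0 ∨ n = 1 := by
  rcases mul_eq_zero.mp (show n * (n - 1) = 0 by linear_combination h) with h' | h'
  · left; exact h'
  · right; omega

lemma zero_or_negone (n : ℤ) (h : n * n = -n) : n = 0 ∨ n = -1 := by
  rcases mul_eq_zero.mp (show n * (n + 1) = 0 by linear_combination h) with h' | h'
  · left; exact h'
  · right; omega

set_option maxHeartbeats 4000000 in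
lemma line_mem (l : Fin 7 → ℤ) (hl : IsLineClass l) : l ∈ lines27 := by
  obtain ⟨h1, h2⟩ := hl
  rw [picInter_expand] at h1
  rw [KX_expand] at h2
  have hrepr : l = ![l 0, l 1, l 2, l 3, l 4, l 5, l 6] := by
    funext i; fin_cases i <;> rfl
  have hcs : (l 1 + l 2 + l 3 + l 4 + l 5 + l 6)^2 ≤
      6 * (l 1 * l 1 + l 2 * l 2 + l 3 * l 3 + l 4 * l 4 + l 5 * l 5 + l 6 * l 6) := by
    nlinarith [sq_nonneg (l 1 - l 2), sq_nonneg (l 1 - l 3), sq_nonneg (l 1 - l 4),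
      sq_nonneg (l 1 - l 5), sq_nonneg (l 1 - l 6), sq_nonneg (l 2 - l 3),
      sq_nonneg (l 2 - l 4), sq_nonneg (l 2 - l 5), sq_nonneg (l 2 - l 6),
      sq_nonneg (l 3 - l 4), sq_nonneg (l 3 - l 5), sq_nonneg (l 3 - l 6),
      sq_nonneg (l 4 - l 5), sq_nonneg (l 4 - l 6), sq_nonneg (l 5 - l 6)]
  have hb0 : 0 ≤ l 0 ∧ l 0 ≤ 2 := by
    constructor <;> nlinarith [sq_nonneg (l 0), hcs]
  have ha : l 0 = 0 ∨ l 0 = 1 ∨ l 0 = 2 := by omega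
  rcases ha with ha0 | ha0 | ha0
  · rw [ha0] at h1 h2
    have q1 : l 1 * l 1 = l 1 := by
      linarith [int_sq_sub (l 1), int_sq_sub (l 2), int_sq_sub (l 3), int_sq_sub (l 4), int_sq_sub (l 5), int_sq_sub (l 6)]
    have q2 : l 2 * l 2 = l 2 := by
      linarith [int_sq_sub (l 1), int_sq_sub (l 2), int_sq_sub (l 3), int_sq_sub (l 4), int_sq_sub (l 5), int_sq_sub (l 6)]
    have q3 : l 3 * l 3 = l 3 := by
      linarith [int_sq_sub (l 1), int_sq_sub (l 2), int_sq_sub (l 3), int_sq_sub (l 4), int_sq_sub (l 5), int_sq_sub (l 6)]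
    have q4 : l 4 * l 4 = l 4 := by
      linarith [int_sq_sub (l 1), int_sq_sub (l 2), int_sq_sub (l 3), int_sq_sub (l 4), int_sq_sub (l 5), int_sq_sub (l 6)]
    have q5 : l 5 * l 5 = l 5 := by
      linarith [int_sq_sub (l 1), int_sq_sub (l 2), int_sq_sub (l 3), int_sq_sub (l 4), int_sq_sub (l 5), int_sq_sub (l 6)]
    have q6 : l 6 * l 6 = l 6 := by
      linarith [int_sq_sub (l 1), int_sq_sub (l 2), int_sq_sub (l 3), int_sq_sub (l 4), int_sq_sub (l 5), int_sq_sub (l 6)]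
    rcases zero_or_one _ q1 with c1 | c1 <;>
      rcases zero_or_one _ q2 with c2 | c2 <;>
      rcases zero_or_one _ q3 with c3 | c3 <;>
      rcases zero_or_one _ q4 with c4 | c4 <;>
      rcases zero_or_one _ q5 with c5 | c5 <;>
      rcases zero_or_one _ q6 with c6 | c6 <;>
      first
        | omega
        | (rw [hrepr, ha0, c1, c2, c3, c4, c5, c6]; decide)
  · rw [ha0] at h1 h2
    have q1 : l 1 * l 1 = -l 1 := by
      linarith [int_sq_add (l 1), int_sq_add (l 2), int_sq_add (l 3), int_sq_add (l 4), int_sq_add (l 5), int_sq_add (l 6)]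
    have q2 : l 2 * l 2 = -l 2 := by
      linarith [int_sq_add (l 1), int_sq_add (l 2), int_sq_add (l 3), int_sq_add (l 4), int_sq_add (l 5), int_sq_add (l 6)]
    have q3 : l 3 * l 3 = -l 3 := by
      linarith [int_sq_add (l 1), int_sq_add (l 2), int_sq_add (l 3), int_sq_add (l 4), int_sq_add (l 5), int_sq_add (l 6)]
    have q4 : l 4 * l 4 = -l 4 := by
      linarith [int_sq_add (l 1), int_sq_add (l 2), int_sq_add (l 3), int_sq_add (l 4), int_sq_add (l 5), int_sq_add (l 6)]
    have q5 : l 5 * l 5 = -l 5 := by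
      linarith [int_sq_add (l 1), int_sq_add (l 2), int_sq_add (l 3), int_sq_add (l 4), int_sq_add (l 5), int_sq_add (l 6)]
    have q6 : l 6 * l 6 = -l 6 := by
      linarith [int_sq_add (l 1), int_sq_add (l 2), int_sq_add (l 3), int_sq_add (l 4), int_sq_add (l 5), int_sq_add (l 6)]
    rcases zero_or_negone _ q1 with c1 | c1 <;>
      rcases zero_or_negone _ q2 with c2 | c2 <;>
      rcases zero_or_negone _ q3 with c3 | c3 <;>
      rcases zero_or_negone _ q4 with c4 | c4 <;>
      rcases zero_or_negone _ q5 with c5 | c5 <;>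
      rcases zero_or_negone _ q6 with c6 | c6 <;>
      first
        | omega
        | (rw [hrepr, ha0, c1, c2, c3, c4, c5, c6]; decide)
  · rw [ha0] at h1 h2
    have q1 : l 1 * l 1 = -l 1 := by
      linarith [int_sq_add (l 1), int_sq_add (l 2), int_sq_add (l 3), int_sq_add (l 4), int_sq_add (l 5), int_sq_add (l 6)]
    have q2 : l 2 * l 2 = -l 2 := by
      linarith [int_sq_add (l 1), int_sq_add (l 2), int_sq_add (l 3), int_sq_add (l 4), int_sq_add (l 5), int_sq_add (l 6)]
    have q3 : l 3 * l 3 = -l 3 := by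
      linarith [int_sq_add (l 1), int_sq_add (l 2), int_sq_add (l 3), int_sq_add (l 4), int_sq_add (l 5), int_sq_add (l 6)]
    have q4 : l 4 * l 4 = -l 4 := by
      linarith [int_sq_add (l 1), int_sq_add (l 2), int_sq_add (l 3), int_sq_add (l 4), int_sq_add (l 5), int_sq_add (l 6)]
    have q5 : l 5 * l 5 = -l 5 := by
      linarith [int_sq_add (l 1), int_sq_add (l 2), int_sq_add (l 3), int_sq_add (l 4), int_sq_add (l 5), int_sq_add (l 6)]
    have q6 : l 6 * l 6 = -l 6 := by
      linarith [int_sq_add (l 1), int_sq_add (l 2), int_sq_add (l 3), int_sq_add (l 4), int_sq_add (l 5), int_sq_add (l 6)]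
    rcases zero_or_negone _ q1 with c1 | c1 <;>
      rcases zero_or_negone _ q2 with c2 | c2 <;>
      rcases zero_or_negone _ q3 with c3 | c3 <;>
      rcases zero_or_negone _ q4 with c4 | c4 <;>
      rcases zero_or_negone _ q5 with c5 | c5 <;>
      rcases zero_or_negone _ q6 with c6 | c6 <;>
      first
        | omega
        | (rw [hrepr, ha0, c1, c2, c3, c4, c5, c6]; decide)

lemma picInter_comm (a b : Fin 7 → ℤ) : picInter a b = picInter b a := by
  simp [picInter_expand]; ring

lemma pI_add_left (x y z : Fin 7 → ℤ) : picInter (x + y) z = picInter x z + picInter y z := by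
  simp [picInter_expand, Pi.add_apply]; ring

lemma pI_smul_left (d : ℤ) (x y : Fin 7 → ℤ) : picInter (d • x) y = d * picInter x y := by
  simp [picInter_expand, Pi.smul_apply, smul_eq_mul]; ring

lemma pI_sub_right (x y z : Fin 7 → ℤ) : picInter x (y - z) = picInter x y - picInter x z := by
  simp [picInter_expand, Pi.sub_apply]; ring

lemma pI_F (x y : Fin 7 → ℤ) : picInter x (-KX - y) = -picInter x KX - picInter x y := by
  simp [picInter_expand, Pi.sub_apply, Pi.neg_apply]; ring

def e6v : Fin 7 → ℤ := ![0, 0, 0, 0, 0, 0, 1]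

def pvec : Fin 5 → Fin 7 → ℤ := ![![1, -1, 0, 0, 0, 0, -1], ![1, 0, -1, 0, 0, 0, -1], ![1, 0, 0, -1, 0, 0, -1], ![1, 0, 0, 0, -1, 0, -1], ![1, 0, 0, 0, 0, -1, -1]]

def sect16 : List (Fin 7 → ℤ) := [
  ![0, 1, 0, 0, 0, 0, 0],
  ![0, 0, 1, 0, 0, 0, 0],
  ![0, 0, 0, 1, 0, 0, 0],
  ![0, 0, 0, 0, 1, 0, 0],
  ![0, 0, 0, 0, 0, 1, 0],
  ![1, -1, -1, 0, 0, 0, 0],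
  ![1, -1, 0, -1, 0, 0, 0],
  ![1, -1, 0, 0, -1, 0, 0],
  ![1, -1, 0, 0, 0, -1, 0],
  ![1, 0, -1, -1, 0, 0, 0],
  ![1, 0, -1, 0, -1, 0, 0],
  ![1, 0, -1, 0, 0, -1, 0],
  ![1, 0, 0, -1, -1, 0, 0],
  ![1, 0, 0, -1, 0, -1, 0],
  ![1, 0, 0, 0, -1, -1, 0],
  ![2, -1, -1, -1, -1, -1, 0]
]

lemma cs6 (x1 x2 x3 x4 x5 x6 : ℤ) : (x1 + x2 + x3 + x4 + x5 + x6)^2 ≤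
    6 * (x1*x1 + x2*x2 + x3*x3 + x4*x4 + x5*x5 + x6*x6) := by
  nlinarith [sq_nonneg (x1 - x2), sq_nonneg (x1 - x3), sq_nonneg (x1 - x4),
    sq_nonneg (x1 - x5), sq_nonneg (x1 - x6), sq_nonneg (x2 - x3),
    sq_nonneg (x2 - x4), sq_nonneg (x2 - x5), sq_nonneg (x2 - x6),
    sq_nonneg (x3 - x4), sq_nonneg (x3 - x5), sq_nonneg (x3 - x6),
    sq_nonneg (x4 - x5), sq_nonneg (x4 - x6), sq_nonneg (x5 - x6)]

lemma negdef_le (w : Fin 7 → ℤ) (hw : picInter KX w = 0) : picInter w w ≤ 0 := by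
  rw [KX_expand] at hw
  rw [picInter_expand]
  have h9 : (w 1 + w 2 + w 3 + w 4 + w 5 + w 6) * (w 1 + w 2 + w 3 + w 4 + w 5 + w 6)
      = 9 * (w 0 * w 0) := by
    linear_combination (3 * w 0 - (w 1 + w 2 + w 3 + w 4 + w 5 + w 6)) * hw
  have := cs6 (w 1) (w 2) (w 3) (w 4) (w 5) (w 6)
  nlinarith [mul_self_nonneg (w 1), mul_self_nonneg (w 2), mul_self_nonneg (w 3),
    mul_self_nonneg (w 4), mul_self_nonneg (w 5), mul_self_nonneg (w 6)]

lemma negdef_eq (w : Fin 7 → ℤ) (hw : picInter KX w = 0) (h0 : picInter w w = 0) : w = 0 := by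
  rw [KX_expand] at hw
  rw [picInter_expand] at h0
  have h9 : (w 1 + w 2 + w 3 + w 4 + w 5 + w 6) * (w 1 + w 2 + w 3 + w 4 + w 5 + w 6)
      = 9 * (w 0 * w 0) := by
    linear_combination (3 * w 0 - (w 1 + w 2 + w 3 + w 4 + w 5 + w 6)) * hw
  have hsum : w 1 * w 1 + w 2 * w 2 + w 3 * w 3 + w 4 * w 4 + w 5 * w 5 + w 6 * w 6 ≤ 0 := by
    nlinarith [cs6 (w 1) (w 2) (w 3) (w 4) (w 5) (w 6)]
  have e1 : w 1 = 0 := mul_self_eq_zero.mp (le_antisymm (by nlinarith [mul_self_nonneg (w 2), mul_self_nonneg (w 3), mul_self_nonneg (w 4), mul_self_nonneg (w 5), mul_self_nonneg (w 6)]) (mul_self_nonneg _))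
  have e2 : w 2 = 0 := mul_self_eq_zero.mp (le_antisymm (by nlinarith [mul_self_nonneg (w 1), mul_self_nonneg (w 3), mul_self_nonneg (w 4), mul_self_nonneg (w 5), mul_self_nonneg (w 6)]) (mul_self_nonneg _))
  have e3 : w 3 = 0 := mul_self_eq_zero.mp (le_antisymm (by nlinarith [mul_self_nonneg (w 1), mul_self_nonneg (w 2), mul_self_nonneg (w 4), mul_self_nonneg (w 5), mul_self_nonneg (w 6)]) (mul_self_nonneg _))
  have e4 : w 4 = 0 := mul_self_eq_zero.mp (le_antisymm (by nlinarith [mul_self_nonneg (w 1), mul_self_nonneg (w 2), mul_self_nonneg (w 3), mul_self_nonneg (w 5), mul_self_nonneg (w 6)]) (mul_self_nonneg _))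
  have e5 : w 5 = 0 := mul_self_eq_zero.mp (le_antisymm (by nlinarith [mul_self_nonneg (w 1), mul_self_nonneg (w 2), mul_self_nonneg (w 3), mul_self_nonneg (w 4), mul_self_nonneg (w 6)]) (mul_self_nonneg _))
  have e6 : w 6 = 0 := mul_self_eq_zero.mp (le_antisymm (by nlinarith [mul_self_nonneg (w 1), mul_self_nonneg (w 2), mul_self_nonneg (w 3), mul_self_nonneg (w 4), mul_self_nonneg (w 5)]) (mul_self_nonneg _))
  have e0 : w 0 = 0 := by
    rw [e1, e2, e3, e4, e5, e6] at h0
    have : w 0 * w 0 = 0 := by linarith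
    exact mul_self_eq_zero.mp this
  funext i
  fin_cases i
  · exact e0
  · exact e1
  · exact e2
  · exact e3
  · exact e4
  · exact e5
  · exact e6

lemma line_inter_bounds (a b : Fin 7 → ℤ) (ha : IsLineClass a) (hb : IsLineClass b)
    (hne : a ≠ b) : 0 ≤ picInter a b ∧ picInter a b ≤ 1 := by
  obtain ⟨ha1, haK⟩ := ha
  obtain ⟨hb1, hbK⟩ := hb
  constructor
  · -- lower bound
    have hw : picInter KX (fun i => a i - b i) = 0 := by
      rw [KX_expand] at haK hbK ⊢
      linarith
    have hle := negdef_le _ hw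
    rw [picInter_expand] at hle
    rw [picInter_expand] at ha1 hb1 ⊢
    have hge : -1 ≤ a 0 * b 0 - (a 1 * b 1 + a 2 * b 2 + a 3 * b 3 + a 4 * b 4 + a 5 * b 5 + a 6 * b 6) := by
      linarith [hle]
    rcases eq_or_lt_of_le hge with heq | hlt
    · exfalso
      have h0 : picInter (fun i => a i - b i) (fun i => a i - b i) = 0 := by
        rw [picInter_expand]
        linear_combination ha1 + hb1 + 2 * heq
      have := negdef_eq _ hw h0
      apply hne
      funext i
      have := congrFun this i
      simp only [Pi.zero_apply] at this
      linarith
    · linarith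
  · have hw : picInter KX (fun i => 3 * a i + 3 * b i + 2 * KX i) = 0 := by
      rw [KX_expand] at haK hbK ⊢
      simp only [show KX 0 = -3 from rfl, show KX 1 = 1 from rfl, show KX 2 = 1 from rfl,
        show KX 3 = 1 from rfl, show KX 4 = 1 from rfl, show KX 5 = 1 from rfl,
        show KX 6 = 1 from rfl]
      linarith
    have hle := negdef_le _ hw
    rw [picInter_expand] at hle
    simp only [show KX 0 = -3 from rfl, show KX 1 = 1 from rfl, show KX 2 = 1 from rfl,
      show KX 3 = 1 from rfl, show KX 4 = 1 from rfl, show KX 5 = 1 from rfl,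
      show KX 6 = 1 from rfl] at hle
    rw [picInter_expand] at ha1 hb1 ⊢
    rw [KX_expand] at haK hbK
    linarith [hle]

instance IsLineClass.dec : DecidablePred IsLineClass := fun l => by
  unfold IsLineClass; infer_instance

lemma D1 : ∀ l ∈ sect16, IsLineClass l ∧ picInter l e6v = 0 := by decide

lemma D2 : ∀ l ∈ lines27, picInter l e6v = 0 → l ∈ sect16 := by decide

lemma D3 : ∀ m ∈ lines27, picInter m e6v = 1 →
    ∃ j : Fin 5, m = pvec j ∨ m = (-KX - e6v) - pvec j := by decide

lemma D4 : ∀ l ∈ sect16, ∀ l' ∈ sect16,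
    (∀ i : Fin 5, picInter l (pvec i) = picInter l' (pvec i)) → l = l' := by decide

lemma D5 : ∀ b : Fin 5 → Bool,
    ((cond (b 0) (1:ℤ) 0) + cond (b 1) 1 0 + cond (b 2) 1 0 + cond (b 3) 1 0 + cond (b 4) 1 0) % 2 = 1 →
    ∃ l ∈ sect16, ∀ i : Fin 5, picInter l (pvec i) = cond (b i) 1 0 := by decide

lemma D6 : ∀ i : Fin 5, IsLineClass (pvec i) ∧ picInter (pvec i) e6v = 1 ∧
    picInter e6v (pvec i) = 1 := by decide

lemma D7 : picInter e6v (-KX - e6v) = 2 := by decide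

def rf (v x : Fin 7 → ℤ) : Fin 7 → ℤ := fun i => x i + picInter x v * v i

lemma rf_pres (v : Fin 7 → ℤ) (hv : picInter v v = -2) (x y : Fin 7 → ℤ) :
    picInter (rf v x) (rf v y) = picInter x y := by
  rw [picInter_expand] at hv
  simp only [rf, picInter_expand]
  linear_combination (x 0 * v 0 - (x 1 * v 1 + x 2 * v 2 + x 3 * v 3 + x 4 * v 4 + x 5 * v 5 + x 6 * v 6)) *
    (y 0 * v 0 - (y 1 * v 1 + y 2 * v 2 + y 3 * v 3 + y 4 * v 4 + y 5 * v 5 + y 6 * v 6)) * hv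

lemma rf_invol (v : Fin 7 → ℤ) (hv : picInter v v = -2) (x : Fin 7 → ℤ) :
    rf v (rf v x) = x := by
  rw [picInter_expand] at hv
  funext i
  simp only [rf, picInter_expand]
  linear_combination ((x 0 * v 0 - (x 1 * v 1 + x 2 * v 2 + x 3 * v 3 + x 4 * v 4 + x 5 * v 5 + x 6 * v 6)) * v i) * hv

lemma rf_K (v : Fin 7 → ℤ) (hKv : picInter KX v = 0) : rf v KX = KX := by
  funext i
  simp only [rf, hKv, zero_mul, add_zero]

lemma rf_add (v x y : Fin 7 → ℤ) : rf v (x + y) = rf v x + rf v y := by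
  funext i
  simp only [rf, Pi.add_apply, picInter_expand]
  ring

lemma sigma_word (L r1 r2 r3 : Fin 7 → ℤ)
    (h1 : picInter r1 r1 = -2) (h2 : picInter r2 r2 = -2) (h3 : picInter r3 r3 = -2)
    (k1 : picInter KX r1 = 0) (k2 : picInter KX r2 = 0) (k3 : picInter KX r3 = 0)
    (hmap : rf r3 (rf r2 (rf r1 L)) = e6v) :
    ∃ σ : AddAut (Fin 7 → ℤ), (∀ a b, picInter (σ a) (σ b) = picInter a b) ∧
      σ KX = KX ∧ σ L = e6v := by
  refine ⟨{ toFun := fun x => rf r3 (rf r2 (rf r1 x)),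
            invFun := fun x => rf r1 (rf r2 (rf r3 x)),
            left_inv := ?_, right_inv := ?_, map_add' := ?_ }, ?_, ?_, ?_⟩
  · intro x
    simp only
    rw [rf_invol r3 h3, rf_invol r2 h2, rf_invol r1 h1]
  · intro x
    simp only
    rw [rf_invol r1 h1, rf_invol r2 h2, rf_invol r3 h3]
  · intro x y
    rw [rf_add, rf_add, rf_add]
  · intro a b
    simp only [AddEquiv.coe_mk, Equiv.coe_fn_mk]
    rw [rf_pres r3 h3, rf_pres r2 h2, rf_pres r1 h1]
  · simp only [AddEquiv.coe_mk, Equiv.coe_fn_mk]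
    rw [rf_K r1 k1, rf_K r2 k2, rf_K r3 k3]
  · simp only [AddEquiv.coe_mk, Equiv.coe_fn_mk]
    exact hmap

set_option maxHeartbeats 4000000 in
lemma exists_sigma (L : Fin 7 → ℤ) (hL : IsLineClass L) :
    ∃ σ : AddAut (Fin 7 → ℤ), (∀ a b, picInter (σ a) (σ b) = picInter a b) ∧
      σ KX = KX ∧ σ L = e6v := by
  have hmem := line_mem L hL
  fin_cases hmem
  · exact sigma_word _ ![0, 1, 0, 0, 0, 0, -1] ![0, 1, 0, 0, 0, 0, -1] ![0, 1, 0, 0, 0, 0, -1] (by decide) (by decide) (by decide) (by decide) (by decide) (by decide) (by decide)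
  · exact sigma_word _ ![0, 0, 1, 0, 0, 0, -1] ![0, 0, 1, 0, 0, 0, -1] ![0, 0, 1, 0, 0, 0, -1] (by decide) (by decide) (by decide) (by decide) (by decide) (by decide) (by decide)
  · exact sigma_word _ ![0, 0, 0, 1, 0, 0, -1] ![0, 0, 0, 1, 0, 0, -1] ![0, 0, 0, 1, 0, 0, -1] (by decide) (by decide) (by decide) (by decide) (by decide) (by decide) (by decide)
  · exact sigma_word _ ![0, 0, 0, 0, 1, 0, -1] ![0, 0, 0, 0, 1, 0, -1] ![0, 0, 0, 0, 1, 0, -1] (by decide) (by decide) (by decide) (by decide) (by decide) (by decide) (by decide)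
  · exact sigma_word _ ![0, 0, 0, 0, 0, 1, -1] ![0, 0, 0, 0, 0, 1, -1] ![0, 0, 0, 0, 0, 1, -1] (by decide) (by decide) (by decide) (by decide) (by decide) (by decide) (by decide)
  · exact sigma_word _ ![0, 1, -1, 0, 0, 0, 0] ![0, 1, -1, 0, 0, 0, 0] ![0, 1, -1, 0, 0, 0, 0] (by decide) (by decide) (by decide) (by decide) (by decide) (by decide) (by decide)
  · exact sigma_word _ ![1, -1, -1, 0, 0, 0, -1] ![1, -1, -1, 0, 0, 0, -1] ![1, -1, -1, 0, 0, 0, -1] (by decide) (by decide) (by decide) (by decide) (by decide) (by decide) (by decide)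
  · exact sigma_word _ ![1, -1, 0, -1, 0, 0, -1] ![1, -1, 0, -1, 0, 0, -1] ![1, -1, 0, -1, 0, 0, -1] (by decide) (by decide) (by decide) (by decide) (by decide) (by decide) (by decide)
  · exact sigma_word _ ![1, -1, 0, 0, -1, 0, -1] ![1, -1, 0, 0, -1, 0, -1] ![1, -1, 0, 0, -1, 0, -1] (by decide) (by decide) (by decide) (by decide) (by decide) (by decide) (by decide)
  · exact sigma_word _ ![1, -1, 0, 0, 0, -1, -1] ![1, -1, 0, 0, 0, -1, -1] ![1, -1, 0, 0, 0, -1, -1] (by decide) (by decide) (by decide) (by decide) (by decide) (by decide) (by decide)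
  · exact sigma_word _ ![1, -1, -1, 0, 0, 0, -1] ![0, 0, 1, 0, 0, 0, -1] ![0, 1, -1, 0, 0, 0, 0] (by decide) (by decide) (by decide) (by decide) (by decide) (by decide) (by decide)
  · exact sigma_word _ ![1, 0, -1, -1, 0, 0, -1] ![1, 0, -1, -1, 0, 0, -1] ![1, 0, -1, -1, 0, 0, -1] (by decide) (by decide) (by decide) (by decide) (by decide) (by decide) (by decide)
  · exact sigma_word _ ![1, 0, -1, 0, -1, 0, -1] ![1, 0, -1, 0, -1, 0, -1] ![1, 0, -1, 0, -1, 0, -1] (by decide) (by decide) (by decide) (by decide) (by decide) (by decide) (by decide)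
  · exact sigma_word _ ![1, 0, -1, 0, 0, -1, -1] ![1, 0, -1, 0, 0, -1, -1] ![1, 0, -1, 0, 0, -1, -1] (by decide) (by decide) (by decide) (by decide) (by decide) (by decide) (by decide)
  · exact sigma_word _ ![1, -1, -1, 0, 0, 0, -1] ![0, 1, 0, 0, 0, 0, -1] ![0, 1, -1, 0, 0, 0, 0] (by decide) (by decide) (by decide) (by decide) (by decide) (by decide) (by decide)
  · exact sigma_word _ ![1, 0, 0, -1, -1, 0, -1] ![1, 0, 0, -1, -1, 0, -1] ![1, 0, 0, -1, -1, 0, -1] (by decide) (by decide) (by decide) (by decide) (by decide) (by decide) (by decide)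
  · exact sigma_word _ ![1, 0, 0, -1, 0, -1, -1] ![1, 0, 0, -1, 0, -1, -1] ![1, 0, 0, -1, 0, -1, -1] (by decide) (by decide) (by decide) (by decide) (by decide) (by decide) (by decide)
  · exact sigma_word _ ![1, -1, 0, -1, 0, 0, -1] ![0, 1, 0, 0, 0, 0, -1] ![0, 1, -1, 0, 0, 0, 0] (by decide) (by decide) (by decide) (by decide) (by decide) (by decide) (by decide)
  · exact sigma_word _ ![1, 0, 0, 0, -1, -1, -1] ![1, 0, 0, 0, -1, -1, -1] ![1, 0, 0, 0, -1, -1, -1] (by decide) (by decide) (by decide) (by decide) (by decide) (by decide) (by decide)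
  · exact sigma_word _ ![1, -1, 0, 0, -1, 0, -1] ![0, 1, 0, 0, 0, 0, -1] ![0, 1, -1, 0, 0, 0, 0] (by decide) (by decide) (by decide) (by decide) (by decide) (by decide) (by decide)
  · exact sigma_word _ ![1, -1, 0, 0, 0, -1, -1] ![0, 1, 0, 0, 0, 0, -1] ![0, 1, -1, 0, 0, 0, 0] (by decide) (by decide) (by decide) (by decide) (by decide) (by decide) (by decide)
  · exact sigma_word _ ![1, 0, -1, -1, -1, 0, 0] ![1, -1, 0, 0, 0, -1, -1] ![0, 1, 0, 0, 0, 0, -1] (by decide) (by decide) (by decide) (by decide) (by decide) (by decide) (by decide)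
  · exact sigma_word _ ![1, -1, 0, -1, -1, 0, 0] ![1, 0, -1, 0, 0, -1, -1] ![0, 0, 1, 0, 0, 0, -1] (by decide) (by decide) (by decide) (by decide) (by decide) (by decide) (by decide)
  · exact sigma_word _ ![1, -1, -1, 0, -1, 0, 0] ![1, 0, 0, -1, 0, -1, -1] ![0, 0, 0, 1, 0, 0, -1] (by decide) (by decide) (by decide) (by decide) (by decide) (by decide) (by decide)
  · exact sigma_word _ ![1, -1, -1, -1, 0, 0, 0] ![1, 0, 0, 0, -1, -1, -1] ![0, 0, 0, 0, 1, 0, -1] (by decide) (by decide) (by decide) (by decide) (by decide) (by decide) (by decide)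
  · exact sigma_word _ ![1, -1, -1, -1, 0, 0, 0] ![1, 0, 0, 0, -1, -1, -1] ![0, 0, 0, 0, 0, 1, -1] (by decide) (by decide) (by decide) (by decide) (by decide) (by decide) (by decide)
  · exact sigma_word _ ![1, -1, -1, -1, 0, 0, 0] ![1, 0, 0, 0, -1, -1, -1] ![0, 1, -1, 0, 0, 0, 0] (by decide) (by decide) (by decide) (by decide) (by decide) (by decide) (by decide)

lemma rho_inv_apply {G : Type*} [Group G] (ρ : G →* Multiplicative (AddAut (Fin 7 → ℤ))) (g : G)
    (x : Fin 7 → ℤ) : (ρ g).toAdd ((ρ g⁻¹).toAdd x) = x := by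
  rw [← AddAut.add_apply, ← toAdd_mul, ← map_mul, mul_inv_cancel, map_one, toAdd_one, AddAut.zero_apply]

lemma main_e6 {G : Type*} [Group G] (ρ : G →* Multiplicative (AddAut (Fin 7 → ℤ)))
    (hlines : ∀ (g : G) (l : Fin 7 → ℤ), IsLineClass l → IsLineClass ((ρ g).toAdd l))
    (hint : ∀ (g : G) (a b : Fin 7 → ℤ), picInter ((ρ g).toAdd a) ((ρ g).toAdd b) = picInter a b)
    (hfix6 : ∀ g : G, (ρ g).toAdd e6v = e6v)
    (s : Fin 7 → ℤ) (hs : ∀ g : G, (ρ g).toAdd s = s)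
    (hsF : picInter s (-KX - e6v) = 1) :
    ∃ L', IsLineClass L' ∧ (∀ g : G, (ρ g).toAdd L' = L') ∧ picInter e6v L' = 0 := by
  set T : ℤ := picInter s (pvec 0) + picInter s (pvec 1) + picInter s (pvec 2) +
    picInter s (pvec 3) + picInter s (pvec 4) with hT
  set d : ℤ := if T % 2 = 1 then 0 else 1 with hdd
  set s' : Fin 7 → ℤ := s + d • e6v with hs'def
  have hs' : ∀ g : G, (ρ g).toAdd s' = s' := by
    intro g; rw [hs'def, map_add, hs g, map_zsmul, hfix6 g]
  have hsp : ∀ i : Fin 5, picInter s' (pvec i) = picInter s (pvec i) + d := by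
    intro i
    rw [hs'def, pI_add_left, pI_smul_left, (D6 i).2.2]
    ring
  have hs'F : picInter s' (-KX - e6v) = 1 + 2 * d := by
    rw [hs'def, pI_add_left, pI_smul_left, hsF, D7]; ring
  have hTodd : (picInter s' (pvec 0) + picInter s' (pvec 1) + picInter s' (pvec 2) +
      picInter s' (pvec 3) + picInter s' (pvec 4)) % 2 = 1 := by
    rw [hsp 0, hsp 1, hsp 2, hsp 3, hsp 4, hdd]
    split_ifs with h
    · omega
    · omega
  set b : Fin 5 → Bool := fun i => decide ((picInter s' (pvec i)) % 2 = 1) with hb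
  have hbval : ∀ i : Fin 5, (cond (b i) (1:ℤ) 0) = picInter s' (pvec i) % 2 := by
    intro i
    by_cases h : (picInter s' (pvec i)) % 2 = 1
    · simp [hb, h]
    · simp [hb, h]; omega
  obtain ⟨l, hlmem, hlp⟩ := D5 b (by rw [hbval 0, hbval 1, hbval 2, hbval 3, hbval 4]; omega)
  obtain ⟨hline, hle6⟩ := D1 l hlmem
  have hrange : ∀ i : Fin 5, picInter l (pvec i) = 0 ∨ picInter l (pvec i) = 1 := by
    intro i; rw [hlp i]; cases b i <;> simp
  have hpar : ∀ i : Fin 5, picInter l (pvec i) % 2 = picInter s' (pvec i) % 2 := by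
    intro i; rw [hlp i, hbval i]; omega
  have hlF : picInter l (-KX - e6v) = 1 := by
    rw [pI_F, picInter_comm l KX, hline.2, hle6]; ring
  refine ⟨l, hline, ?_, by rw [picInter_comm]; exact hle6⟩
  intro g
  have hgl_line : IsLineClass ((ρ g).toAdd l) := hlines g l hline
  have hgl_e6 : picInter ((ρ g).toAdd l) e6v = 0 := by
    conv_lhs => rw [← hfix6 g]
    rw [hint g l e6v]
    exact hle6
  have hgl_mem : (ρ g).toAdd l ∈ sect16 := D2 _ (line_mem _ hgl_line) hgl_e6
  have key : ∀ i : Fin 5, picInter ((ρ g).toAdd l) (pvec i) = picInter l (pvec i) := by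
    intro i
    have hminv : (ρ g).toAdd ((ρ g⁻¹).toAdd (pvec i)) = pvec i := rho_inv_apply ρ g _
    set m : Fin 7 → ℤ := (ρ g⁻¹).toAdd (pvec i) with hmdef
    have hm_line : IsLineClass m := hlines g⁻¹ _ (D6 i).1
    have hm_e6 : picInter m e6v = 1 := by
      rw [hmdef]
      conv_lhs => rw [← hfix6 g⁻¹]
      rw [hint g⁻¹ (pvec i) e6v]
      exact (D6 i).2.1
    have hglp : picInter ((ρ g).toAdd l) (pvec i) = picInter l m := by
      conv_lhs => rw [← hminv]
      exact hint g l m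
    have hsm : picInter s' m = picInter s' (pvec i) := by
      have h := hint g s' m
      rw [hs' g, hminv] at h
      exact h.symm
    have hlm_range : picInter l m = 0 ∨ picInter l m = 1 := by
      have hne : l ≠ m := by
        intro h
        rw [h] at hle6
        omega
      have := line_inter_bounds l m hline hm_line hne
      omega
    have hlm_par : picInter l m % 2 = picInter s' m % 2 := by
      obtain ⟨j, hj | hj⟩ := D3 m (line_mem m hm_line) hm_e6
      · rw [hj]; exact hpar j
      · rw [hj, pI_sub_right, hlF, pI_sub_right, hs'F]
        have := hpar j
        omega
    have h1 := hpar i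
    have h2 := hrange i
    rw [hglp]
    omega
  have := D4 l hlmem ((ρ g).toAdd l) hgl_mem (fun i => (key i).symm)
  exact this.symm

/-- Let `L` be a `k`-line on a smooth cubic surface `X/k` and `f : X → ℙ¹`
the associated conic bundle, with fibre class `F = -KX - L`.  Then `f`
admits a section (equivalently, there is a Galois-fixed class of
fibre-degree 1) iff there is a `k`-line `L'` disjoint from `L`; and every
such `L'` is a section of `f`. -/
theorem stmt6
    (ρ : G →* Multiplicative (AddAut (Fin 7 → ℤ)))
    (hlines : ∀ (g : G) (l : Fin 7 → ℤ), IsLineClass l → IsLineClass ((ρ g).toAdd l))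
    (hint : ∀ (g : G) (a b : Fin 7 → ℤ), picInter ((ρ g).toAdd a) ((ρ g).toAdd b) = picInter a b)
    (hK : ∀ g : G, (ρ g).toAdd KX = KX)
    (L : Fin 7 → ℤ) (hL : IsLineClass L) (hLfix : ∀ g : G, (ρ g).toAdd L = L) :
    ((∃ s : Fin 7 → ℤ, (∀ g : G, (ρ g).toAdd s = s) ∧ picInter s (-KX - L) = 1) ↔
        ∃ L', IsLineClass L' ∧ (∀ g : G, (ρ g).toAdd L' = L') ∧ picInter L L' = 0) ∧
      ∀ L', IsLineClass L' → (∀ g : G, (ρ g).toAdd L' = L') → picInter L L' = 0 →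
        picInter L' (-KX - L) = 1 := by
  have part2 : ∀ L', IsLineClass L' → (∀ g : G, (ρ g).toAdd L' = L') → picInter L L' = 0 →
      picInter L' (-KX - L) = 1 := by
    intro L' hL' hfix' h0
    rw [pI_F, picInter_comm L' KX, hL'.2, picInter_comm L' L, h0]
    ring
  refine ⟨⟨?_, ?_⟩, part2⟩
  · rintro ⟨s, hs, hsF⟩
    obtain ⟨σ, hσp, hσK, hσL⟩ := exists_sigma L hL
    have hσp' : ∀ a b, picInter (σ.symm a) (σ.symm b) = picInter a b := by
      intro a b
      have h := hσp (σ.symm a) (σ.symm b)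
      rw [AddEquiv.apply_symm_apply, AddEquiv.apply_symm_apply] at h
      exact h.symm
    have hσK' : σ.symm KX = KX := by
      conv_lhs => rw [← hσK]
      exact σ.symm_apply_apply KX
    have hσL' : σ.symm e6v = L := by
      rw [← hσL]; exact σ.symm_apply_apply L
    let ρ' : G →* Multiplicative (AddAut (Fin 7 → ℤ)) :=
      { toFun := fun g => Multiplicative.ofAdd (σ.symm.trans ((ρ g).toAdd.trans σ)),
        map_one' := by
          apply Multiplicative.toAdd.injective
          ext x
          simp [AddEquiv.trans_apply]
        map_mul' := by
          intro g h
          apply Multiplicative.toAdd.injective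
          ext x
          simp [AddEquiv.trans_apply, AddAut.add_apply, map_mul] }
    have hρ'app : ∀ (g : G) (x : Fin 7 → ℤ), (ρ' g).toAdd x = σ ((ρ g).toAdd (σ.symm x)) := fun g x => rfl
    have hlines' : ∀ (g : G) (l : Fin 7 → ℤ), IsLineClass l → IsLineClass ((ρ' g).toAdd l) := by
      intro g l hl
      rw [hρ'app]
      have h1 : IsLineClass ((ρ g).toAdd (σ.symm l)) := by
        refine hlines g _ ⟨?_, ?_⟩
        · rw [hσp']; exact hl.1
        · rw [← hσK', hσp']; exact hl.2
      exact ⟨by rw [hσp]; exact h1.1, by rw [← hσK, hσp]; exact h1.2⟩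
    have hint' : ∀ (g : G) (a b : Fin 7 → ℤ), picInter ((ρ' g).toAdd a) ((ρ' g).toAdd b) = picInter a b := by
      intro g a b
      rw [hρ'app, hρ'app, hσp, hint, hσp']
    have hfix6' : ∀ g : G, (ρ' g).toAdd e6v = e6v := by
      intro g; rw [hρ'app, hσL', hLfix g, hσL]
    have hs1 : ∀ g : G, (ρ' g).toAdd (σ s) = σ s := by
      intro g; rw [hρ'app, σ.symm_apply_apply, hs g]
    have hsF1 : picInter (σ s) (-KX - e6v) = 1 := by
      have hF : σ (-KX - L) = -KX - e6v := by rw [map_sub, map_neg, hσK, hσL]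
      rw [← hF, hσp]; exact hsF
    obtain ⟨l, hl1, hl2, hl3⟩ := main_e6 ρ' hlines' hint' hfix6' (σ s) hs1 hsF1
    refine ⟨σ.symm l, ⟨?_, ?_⟩, ?_, ?_⟩
    · rw [hσp']; exact hl1.1
    · rw [← hσK', hσp']; exact hl1.2
    · intro g
      have h := hl2 g
      rw [hρ'app] at h
      have h2 := congrArg σ.symm h
      rwa [σ.symm_apply_apply] at h2
    · rw [← hσp, hσL, σ.apply_symm_apply]
      exact hl3
  · rintro ⟨L', hL', hfix', hLL'⟩
    exact ⟨L', hfix', part2 L' hL' hfix' hLL'⟩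
end

section
/- A smooth conic over a field F possessing a point over a field extension of odd degree has an F-rational point. -/
open scoped TensorProduct

open Polynomial IntermediateField

universe w

def qform {F R : Type*} [CommRing F] [CommRing R] (M : Matrix (Fin 3) (Fin 3) F)
    (f : F →+* R) (x : Fin 3 → R) : R :=
  ∑ i, ∑ j, f (M i j) * x i * x j

lemma qform_map {F R S : Type*} [CommRing F] [CommRing R] [CommRing S]
    (M : Matrix (Fin 3) (Fin 3) F) (f : F →+* R) (φ : R →+* S) (x : Fin 3 → R) :
    φ (qform M f x) = qform M (φ.comp f) (φ ∘ x) := by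
  simp [qform, map_sum, map_mul]

lemma qform_matrix_map {F R S : Type*} [CommRing F] [CommRing R] [CommRing S]
    (M : Matrix (Fin 3) (Fin 3) F) (f : F →+* R) (g : R →+* S) (x : Fin 3 → S) :
    qform (M.map f) g x = qform M (g.comp f) x := by
  simp [qform, Matrix.map_apply]

lemma qform_natDegree_le {F : Type*} [CommRing F] (M : Matrix (Fin 3) (Fin 3) F)
    (f : Fin 3 → F[X]) (m : ℕ) (h : ∀ i, (f i).natDegree ≤ m) :
    (qform M Polynomial.C f).natDegree ≤ 2 * m := by
  apply Polynomial.natDegree_sum_le_of_forall_le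
  intro i _
  apply Polynomial.natDegree_sum_le_of_forall_le
  intro j _
  calc (Polynomial.C (M i j) * f i * f j).natDegree
      ≤ (Polynomial.C (M i j) * f i).natDegree + (f j).natDegree := Polynomial.natDegree_mul_le
    _ ≤ ((Polynomial.C (M i j)).natDegree + (f i).natDegree) + (f j).natDegree :=
        Nat.add_le_add_right Polynomial.natDegree_mul_le _
    _ ≤ (0 + m) + m :=
        add_le_add (add_le_add (le_of_eq (Polynomial.natDegree_C _)) (h i)) (h j)
    _ = 2 * m := by omega

lemma qform_coeff {F : Type*} [CommRing F] (M : Matrix (Fin 3) (Fin 3) F)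
    (f : Fin 3 → F[X]) (m : ℕ) (h : ∀ i, (f i).natDegree ≤ m) :
    (qform M Polynomial.C f).coeff (2 * m) = qform M (RingHom.id F) (fun i => (f i).coeff m) := by
  unfold qform
  rw [Polynomial.finset_sum_coeff]
  refine Finset.sum_congr rfl fun i _ => ?_
  rw [Polynomial.finset_sum_coeff]
  refine Finset.sum_congr rfl fun j _ => ?_
  rw [mul_assoc, Polynomial.coeff_C_mul, show 2 * m = m + m by omega,
    Polynomial.coeff_mul_add_eq_of_natDegree_le (h i) (h j)]
  simp [mul_assoc]

lemma exists_odd_degree_irreducible_factor {K : Type*} [Field K] (h : K[X])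
    (hodd : Odd h.natDegree) :
    ∃ g : K[X], Irreducible g ∧ g ∣ h ∧ Odd g.natDegree := by
  obtain ⟨n, hd⟩ : ∃ n, h.natDegree = n := ⟨_, rfl⟩
  induction n using Nat.strong_induction_on generalizing h with
  | _ n IH =>
  subst hd
  have h0 : h ≠ 0 := by rintro rfl; simp at hodd
  have hu : ¬ IsUnit h := by
    intro hu
    rw [Polynomial.isUnit_iff] at hu
    obtain ⟨c, -, rfl⟩ := hu
    simp at hodd
  obtain ⟨g₁, hg₁, hdvd⟩ := WfDvdMonoid.exists_irreducible_factor hu h0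
  by_cases hodd₁ : Odd g₁.natDegree
  · exact ⟨g₁, hg₁, hdvd, hodd₁⟩
  · obtain ⟨h', rfl⟩ := hdvd
    have h'0 : h' ≠ 0 := fun h' => h0 (by simp [h'])
    have hdeg : (g₁ * h').natDegree = g₁.natDegree + h'.natDegree :=
      Polynomial.natDegree_mul hg₁.ne_zero h'0
    have hg₁pos : 0 < g₁.natDegree := hg₁.natDegree_pos
    have hodd' : Odd h'.natDegree := by
      rw [Nat.odd_iff] at hodd ⊢
      rw [Nat.not_odd_iff] at hodd₁
      omega
    obtain ⟨g, hg, hgd, hgo⟩ := IH h'.natDegree (by omega) h' hodd' rfl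
    exact ⟨g, hg, hgd.trans (dvd_mul_left _ _), hgo⟩

theorem springer_aux : ∀ n : ℕ, Odd n → ∀ (F E : Type w) [Field F] [Field E],
    ∀ [Algebra F E] [FiniteDimensional F E], Module.finrank F E = n →
    ∀ M : Matrix (Fin 3) (Fin 3) F,
    (∀ x : Fin 3 → F, qform M (RingHom.id F) x = 0 → x = 0) →
    ∀ x : Fin 3 → E, qform M (algebraMap F E) x = 0 → x = 0 := by
  intro n
  induction n using Nat.strong_induction_on with
  | _ n IH =>
  intro hodd F E _ _ _ _ hrank M haniso x hx
  classical
  by_cases hbot : ∀ i, x i ∈ (⊥ : IntermediateField F E)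
  · -- descent to F
    choose w hw using fun i => (IntermediateField.mem_bot).1 (hbot i)
    have hxw : x = ⇑(algebraMap F E) ∘ w := by funext i; exact (hw i).symm
    have h1 : algebraMap F E (qform M (RingHom.id F) w) = qform M (algebraMap F E) x := by
      rw [qform_map, RingHom.comp_id, ← hxw]
    have hw0 : qform M (RingHom.id F) w = 0 :=
      (algebraMap F E).injective (by rw [h1, hx, map_zero])
    rw [hxw, haniso w hw0]
    funext i; simp
  · push_neg at hbot
    obtain ⟨i₀, hi₀⟩ := hbot
    have hx0 : x i₀ ≠ 0 := fun h => hi₀ (h ▸ zero_mem _)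
    set α := x i₀ with hα
    have hint : IsIntegral F α := IsIntegral.of_finite F α
    have hd1 : Module.finrank F F⟮α⟯ = (minpoly F α).natDegree :=
      IntermediateField.adjoin.finrank hint
    have htower : Module.finrank F F⟮α⟯ * Module.finrank F⟮α⟯ E = n := by
      rw [Module.finrank_mul_finrank, hrank]
    have hd1pos : 0 < Module.finrank F F⟮α⟯ := Module.finrank_pos
    have hd2pos : 0 < Module.finrank F⟮α⟯ E := Module.finrank_pos
    have hd1gt : 1 < Module.finrank F F⟮α⟯ := by
      rcases Nat.lt_or_ge 1 (Module.finrank F F⟮α⟯) with h | h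
      · exact h
      · exfalso
        have h1 : Module.finrank F F⟮α⟯ = 1 := by omega
        exact hi₀ ((IntermediateField.finrank_eq_one_iff.mp h1) ▸
          IntermediateField.mem_adjoin_simple_self F α)
    have hoddpair := (Nat.odd_mul.mp (htower ▸ hodd))
    by_cases htop : F⟮α⟯ = ⊤
    · -- polynomial case
      exfalso
      set p := minpoly F α with hp
      have hn : p.natDegree = n := by
        rw [(Field.primitive_element_iff_minpoly_natDegree_eq F α).mp htop, hrank]
      have hn1 : 1 < n := by rw [← hn, ← hd1]; exact hd1gt
      -- surjectivity of aeval α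
      have hadj : Algebra.adjoin F {α} = ⊤ := by
        rw [← IntermediateField.adjoin_simple_toSubalgebra_of_isAlgebraic hint.isAlgebraic, htop,
          IntermediateField.top_toSubalgebra]
      have hsurj : ∀ e : E, ∃ q : F[X], Polynomial.aeval α q = e := by
        intro e
        have : e ∈ Algebra.adjoin F {α} := hadj ▸ Algebra.mem_top
        rw [Algebra.adjoin_singleton_eq_range_aeval] at this
        exact this
      choose f₀ hf₀ using fun i => hsurj (x i)
      have hmonic : p.Monic := minpoly.monic hint
      set f₁ : Fin 3 → F[X] := fun i => f₀ i %ₘ p with hf₁def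
      have hf₁x : ∀ i, Polynomial.aeval α (f₁ i) = x i := by
        intro i
        have h2 := congrArg (Polynomial.aeval α (R := F)) (Polynomial.modByMonic_add_div (f₀ i) p)
        rw [map_add, map_mul, minpoly.aeval, zero_mul, add_zero, hf₀] at h2
        exact h2
      have hf₁deg : ∀ i, (f₁ i).natDegree < n := by
        intro i
        rw [← hn]
        exact Polynomial.natDegree_modByMonic_lt (f₀ i) hmonic
          (fun h1 => by simp [h1] at hn; omega)
      set g₀ : F[X] := EuclideanDomain.gcd (f₁ 0) (EuclideanDomain.gcd (f₁ 1) (f₁ 2)) with hg₀def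
      have hf₁i₀ : f₁ i₀ ≠ 0 := by
        intro h
        exact hx0 (by rw [hα, ← hf₁x i₀, h, map_zero])
      have hg₀dvd : ∀ i, g₀ ∣ f₁ i := by
        intro i
        fin_cases i
        · exact EuclideanDomain.gcd_dvd_left _ _
        · exact (EuclideanDomain.gcd_dvd_right _ _).trans (EuclideanDomain.gcd_dvd_left _ _)
        · exact (EuclideanDomain.gcd_dvd_right _ _).trans (EuclideanDomain.gcd_dvd_right _ _)
      have hg₀ne : g₀ ≠ 0 := fun h => hf₁i₀ (by
        simpa [h] using hg₀dvd i₀)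
      choose f hf using fun i => hg₀dvd i
      have hfi₀ : f i₀ ≠ 0 := by
        intro h
        exact hf₁i₀ (by rw [hf i₀, h, mul_zero])
      have hfdeg : ∀ i, (f i).natDegree < n := by
        intro i
        by_cases h : f i = 0
        · rw [h]; simpa using hn1.trans_le le_rfl |>.trans_le le_rfl |> fun _ => by omega
        · have := Polynomial.natDegree_mul hg₀ne h
          rw [← hf i] at this
          have h2 := hf₁deg i
          omega
      -- max degree
      set m := Finset.univ.sup fun i => (f i).natDegree with hm_def
      have hm : ∀ i, (f i).natDegree ≤ m := fun i => by
        rw [hm_def]; exact Finset.le_sup (f := fun i => (f i).natDegree) (Finset.mem_univ i)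
      obtain ⟨i₁, -, hi₁⟩ := Finset.exists_mem_eq_sup Finset.univ
        ⟨0, Finset.mem_univ 0⟩ (fun i => (f i).natDegree)
      have hmn : m < n := by rw [hm_def, hi₁]; exact hfdeg i₁
      set c : Fin 3 → F := fun i => (f i).coeff m with hc_def
      have hcne : c ≠ 0 := by
        intro hczero
        have hcz : ∀ i, (f i).coeff m = 0 := fun i => congrFun hczero i
        by_cases hfi₁ : f i₁ = 0
        · have hm0 : m = 0 := by rw [hm_def, hi₁, hfi₁]; simp
          have hd0 : (f i₀).natDegree = 0 := le_antisymm (hm0 ▸ hm i₀) (Nat.zero_le _)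
          have hz : (f i₀).coeff 0 = 0 := by rw [← hm0]; exact hcz i₀
          have : f i₀ = 0 := by
            obtain ⟨a, ha⟩ := Polynomial.natDegree_eq_zero.mp hd0
            rw [← ha, Polynomial.coeff_C] at hz
            simp at hz
            rw [← ha, hz]
            simp
          exact hfi₀ this
        · have hmm : (f i₁).natDegree = m := by rw [hm_def, hi₁]
          have hz := hcz i₁
          rw [← hmm, Polynomial.coeff_natDegree] at hz
          exact Polynomial.leadingCoeff_ne_zero.mpr hfi₁ hz
      set P := qform M Polynomial.C f with hP_def
      have hPco : P.coeff (2 * m) = qform M (RingHom.id F) c := qform_coeff M f m hm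
      have hPcone : P.coeff (2 * m) ≠ 0 := by
        rw [hPco]
        intro h
        exact hcne (haniso c h)
      have hPne : P ≠ 0 := fun h => hPcone (by rw [h]; simp)
      have hPdeg : P.natDegree = 2 * m :=
        le_antisymm (qform_natDegree_le M f m hm) (Polynomial.le_natDegree_of_ne_zero hPcone)
      -- p divides g₀^2 * P
      have hq1 : qform M Polynomial.C f₁ = g₀ ^ 2 * P := by
        simp only [hP_def, qform, Finset.mul_sum]
        refine Finset.sum_congr rfl fun i _ => Finset.sum_congr rfl fun j _ => ?_
        rw [hf i, hf j]; ring
      have haev : Polynomial.aeval α (qform M Polynomial.C f₁) = 0 := by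
        have h2 := qform_map M Polynomial.C (Polynomial.aeval α (R := F)).toRingHom f₁
        have h3 : (Polynomial.aeval α (R := F)).toRingHom.comp Polynomial.C = algebraMap F E :=
          RingHom.ext fun a => by simp
        have h4 : (⇑(Polynomial.aeval α (R := F)).toRingHom ∘ f₁) = x := funext hf₁x
        rw [h3, h4] at h2
        rw [show (Polynomial.aeval α (R := F)) (qform M Polynomial.C f₁)
          = qform M (algebraMap F E) x from h2, hx]
      have hpdvd : p ∣ g₀ ^ 2 * P := minpoly.dvd F α (by rw [← hq1]; exact haev)
      have hprime : Prime p := (minpoly.irreducible hint).prime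
      have hpg₀ : ¬ p ∣ g₀ := by
        intro hd
        have h1 : p.natDegree ≤ g₀.natDegree := Polynomial.natDegree_le_of_dvd hd hg₀ne
        have h2 : g₀.natDegree ≤ (f₁ i₀).natDegree :=
          Polynomial.natDegree_le_of_dvd (hg₀dvd i₀) hf₁i₀
        have h3 := hf₁deg i₀
        omega
      have hpP : p ∣ P := by
        rcases hprime.dvd_mul.mp hpdvd with h | h
        · exact absurd (hprime.dvd_of_dvd_pow h) hpg₀
        · exact h
      obtain ⟨h, hh⟩ := hpP
      have hh0 : h ≠ 0 := fun h0 => hPne (by rw [hh, h0, mul_zero])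
      have hdegh : n + h.natDegree = 2 * m := by
        have := Polynomial.natDegree_mul (minpoly.ne_zero hint) hh0
        rw [← hh, hPdeg, hn] at this
        omega
      have hodd_h : Odd h.natDegree := by
        rw [Nat.odd_iff] at hodd ⊢
        omega
      obtain ⟨g, hgirr, hgdvd, hgodd⟩ := exists_odd_degree_irreducible_factor h hodd_h
      have hgn : g.natDegree < n := by
        have h1 : g.natDegree ≤ h.natDegree := Polynomial.natDegree_le_of_dvd hgdvd hh0
        omega
      have hg0 : g ≠ 0 := hgirr.ne_zero
      haveI : Fact (Irreducible g) := ⟨hgirr⟩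
      haveI : FiniteDimensional F (AdjoinRoot g) :=
        Module.Finite.of_basis (AdjoinRoot.powerBasis hg0).basis
      have hKrank : Module.finrank F (AdjoinRoot g) = g.natDegree := by
        rw [(AdjoinRoot.powerBasis hg0).finrank]
        rfl
      set y : Fin 3 → AdjoinRoot g := fun i => AdjoinRoot.mk g (f i) with hy_def
      have hy0 : qform M (algebraMap F (AdjoinRoot g)) y = 0 := by
        have h2 := qform_map M Polynomial.C (AdjoinRoot.mk g) f
        have h3 : (AdjoinRoot.mk g).comp Polynomial.C = algebraMap F (AdjoinRoot g) := rfl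
        rw [h3] at h2
        have h4 : qform M (algebraMap F (AdjoinRoot g)) y = AdjoinRoot.mk g P := h2.symm
        rw [h4, AdjoinRoot.mk_eq_zero.mpr (hgdvd.trans ⟨p, by rw [hh]; ring⟩)]
      have hy := IH g.natDegree hgn hgodd F (AdjoinRoot g) hKrank M haniso y hy0
      have hgdvdf : ∀ i, g ∣ f i := fun i => AdjoinRoot.mk_eq_zero.mp (congrFun hy i)
      have hgg₀ : g₀ * g ∣ g₀ := by
        have hdvd2 : ∀ i, g₀ * g ∣ f₁ i := fun i =>
          (hf i) ▸ mul_dvd_mul_left g₀ (hgdvdf i)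
        exact EuclideanDomain.dvd_gcd (hdvd2 0) (EuclideanDomain.dvd_gcd (hdvd2 1) (hdvd2 2))
      have h5 : g₀ * g ∣ g₀ * 1 := by rw [mul_one]; exact hgg₀
      exact hgirr.not_isUnit (isUnit_of_dvd_one ((mul_dvd_mul_iff_left hg₀ne).mp h5))
    · -- two-step case
      set d1 := Module.finrank F F⟮α⟯ with hd1_def
      set d2 := Module.finrank F⟮α⟯ E with hd2_def
      have hd1odd : Odd d1 := hoddpair.1
      have hd2odd : Odd d2 := hoddpair.2
      have hd1ne : d1 ≠ n := by
        intro h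
        apply htop
        rw [Field.primitive_element_iff_minpoly_natDegree_eq F α, ← hd1, h, hrank]
      have hd1lt : d1 < n := lt_of_le_of_ne (htower ▸ Nat.le_mul_of_pos_right d1 hd2pos) hd1ne
      have hd2lt : d2 < n := by nlinarith
      have haniso2 : ∀ y : Fin 3 → F⟮α⟯, qform M (algebraMap F F⟮α⟯) y = 0 → y = 0 :=
        fun y hy => IH d1 hd1lt hd1odd F F⟮α⟯ rfl M haniso y hy
      have haniso2' : ∀ y : Fin 3 → F⟮α⟯,
          qform (M.map (algebraMap F F⟮α⟯)) (RingHom.id F⟮α⟯) y = 0 → y = 0 := by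
        intro y hy
        rw [qform_matrix_map, RingHom.id_comp] at hy
        exact haniso2 y hy
      refine IH d2 hd2lt hd2odd F⟮α⟯ E rfl (M.map (algebraMap F F⟮α⟯)) haniso2' x ?_
      rw [qform_matrix_map, ← IsScalarTower.algebraMap_eq F F⟮α⟯ E]
      exact hx

lemma bilin_expand {F : Type*} [CommRing F] (B : LinearMap.BilinForm F (Fin 3 → F))
    (x : Fin 3 → F) :
    B x x = ∑ i, ∑ j, B (Pi.single i 1) (Pi.single j 1) * x i * x j := by
  have hx : x = ∑ i, x i • (Pi.single i (1 : F) : Fin 3 → F) := by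
    funext j
    rw [Finset.sum_apply]
    simp [Pi.single_apply, eq_comm]
  conv_lhs => rw [hx]
  simp only [map_sum, LinearMap.sum_apply, LinearMap.map_smul, LinearMap.smul_apply,
    smul_eq_mul]
  rw [Finset.sum_comm]
  refine Finset.sum_congr rfl fun i _ => Finset.sum_congr rfl fun j _ => by ring

set_option maxHeartbeats 1000000 in
set_option synthInstance.maxHeartbeats 400000 in
/-- Springer's theorem for conics: a smooth conic over a field `F`
(a nondegenerate ternary quadratic form `q`) with a point over a finite
field extension `E/F` of odd degree has an `F`-rational point. -/
theorem stmt15 (F : Type*) [Field F] [Invertible (2 : F)]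
    (E : Type*) [Field E] [Algebra F E] [FiniteDimensional F E]
    (hodd : Odd (Module.finrank F E))
    (q : QuadraticForm F (Fin 3 → F))
    (hq : (QuadraticMap.associated (R := F) q).Nondegenerate)
    (hE : ∃ v : E ⊗[F] (Fin 3 → F), v ≠ 0 ∧ q.baseChange E v = 0) :
    ∃ w : Fin 3 → F, w ≠ 0 ∧ q w = 0 := by
  by_contra hF
  push_neg at hF
  obtain ⟨v, hv0, hv⟩ := hE
  classical
  letI : Invertible (2 : E) := (Invertible.map (algebraMap F E) 2).copy 2 (map_ofNat _ _).symm
  set M : Matrix (Fin 3) (Fin 3) F :=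
    fun i j => (QuadraticMap.associated (R := F) q) (Pi.single i 1) (Pi.single j 1) with hM
  have hqform : ∀ wv : Fin 3 → F, q wv = qform M (RingHom.id F) wv := by
    intro wv
    rw [← QuadraticMap.associated_eq_self_apply F q wv]
    rw [bilin_expand]
    simp only [qform, hM, RingHom.id_apply]
  have haniso : ∀ wv : Fin 3 → F, qform M (RingHom.id F) wv = 0 → wv = 0 := by
    intro wv hw
    by_contra hwne
    exact hF wv hwne (by rw [hqform, hw])
  -- coordinates of v
  set bE := (Pi.basisFun F (Fin 3)).baseChange E with hbE
  set y : Fin 3 → E := fun i => bE.repr v i with hy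
  have hv_sum : v = ∑ i, y i ⊗ₜ[F] (Pi.single i (1 : F) : Fin 3 → F) := by
    conv_lhs => rw [← bE.sum_repr v]
    refine Finset.sum_congr rfl fun i _ => ?_
    rw [hbE, Module.Basis.baseChange_apply, TensorProduct.smul_tmul', smul_eq_mul, mul_one,
      Pi.basisFun_apply]
  have hy0 : y ≠ 0 := by
    intro h
    apply hv0
    rw [hv_sum]
    refine Finset.sum_eq_zero fun i _ => ?_
    rw [show y i = 0 from congrFun h i, TensorProduct.zero_tmul]
  -- compute the base-changed form
  have hqy : qform M (algebraMap F E) y = 0 := by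
    have h1 : q.baseChange E v = qform M (algebraMap F E) y := by
      rw [← QuadraticMap.associated_eq_self_apply E (q.baseChange E) v]
      have h2 : QuadraticMap.associatedHom E (q.baseChange E)
          = LinearMap.BilinForm.baseChange E (QuadraticMap.associated (R := F) q) :=
        QuadraticForm.associated_baseChange q
      rw [h2]
      conv_lhs => rw [hv_sum]
      simp only [map_sum, LinearMap.sum_apply, LinearMap.BilinForm.baseChange_tmul]
      unfold qform
      rw [Finset.sum_comm]
      refine Finset.sum_congr rfl fun i _ => Finset.sum_congr rfl fun j _ => ?_
      rw [Algebra.smul_def]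
      ring
    rw [← h1, hv]
  -- bridge through ⊥ to equalize universes
  set Fb := (⊥ : IntermediateField F E) with hFb
  set ψ : ↥Fb →+* F := (IntermediateField.botEquiv F E : ↥Fb →ₐ[F] F).toRingHom with hψ
  have hψcomp : ψ.comp (algebraMap F ↥Fb) = RingHom.id F := by
    ext a
    exact IntermediateField.botEquiv_def a
  have haniso_b : ∀ z : Fin 3 → ↥Fb,
      qform (M.map (algebraMap F ↥Fb)) (RingHom.id ↥Fb) z = 0 → z = 0 := by
    intro z hz
    rw [qform_matrix_map, RingHom.id_comp] at hz
    have h2 := qform_map M (algebraMap F ↥Fb) ψ z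
    rw [hz, map_zero, hψcomp] at h2
    have h3 := haniso _ h2.symm
    funext i
    show z i = 0
    apply ψ.injective
    rw [map_zero]
    exact congrFun h3 i
  have hrank_b : Module.finrank ↥Fb E = Module.finrank F E :=
    IntermediateField.finrank_bot'
  have hy_b : qform (M.map (algebraMap F ↥Fb)) (algebraMap ↥Fb E) y = 0 := by
    rw [qform_matrix_map, ← IsScalarTower.algebraMap_eq F ↥Fb E]
    exact hqy
  exact hy0 (springer_aux (Module.finrank F E) hodd ↥Fb E hrank_b
    (M.map (algebraMap F ↥Fb)) haniso_b y hy_b)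
end
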